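/- arXiv:1004.2030 — 5 statements merged into one kernel-verified Lean document; each statement's English description precedes it below -/
import Mathlib

section
/- The real number 1/64 − (1/8)·Σ_{k=1}^∞ 2^{−(k²+4k+6)} is irrational. -/
private def gg (k : ℕ) : ℕ := (k + 1) ^ 2 + 4 * (k + 1) + 6

private lemma gg_succ (k : ℕ) : gg (k + 1) = gg k + (2 * k + 7) := by
  simp [gg]; ring

private lemma gg_mono_add (n i : ℕ) : gg n + i ≤ gg (i + n) := by
  induction i with
  | zero => simp
  | succ i ih =>
    have h1 : i + 1 + n = (i + n) + 1 := by omega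
    rw [h1, gg_succ]
    omega

private lemma gg_ge (k : ℕ) : k ≤ gg k := by
  have := gg_mono_add 0 k
  simp [gg] at *
  omega

private lemma summable_f : Summable (fun k : ℕ => (1 : ℝ) / 2 ^ gg k) := by
  refine Summable.of_nonneg_of_le (fun k => by positivity) (fun k => ?_)
    (summable_geometric_of_lt_one (r := (1/2 : ℝ)) (by norm_num) (by norm_num))
  rw [div_pow, one_pow]
  apply div_le_div_of_nonneg_left (by norm_num) (by positivity)
  exact pow_le_pow_right₀ (by norm_num) (gg_ge k)

private lemma irrational_S : Irrational (∑' k : ℕ, (1 : ℝ) / 2 ^ gg k) := by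
  set S := ∑' k : ℕ, (1 : ℝ) / 2 ^ gg k with hSdef
  rw [Irrational]
  intro ⟨q, hq⟩
  set k : ℕ := q.den with hk
  have hbpos : 0 < k := q.pos
  have hsplit := (Summable.sum_add_tsum_nat_add (k + 1) summable_f)
  set T : ℝ := ∑ i ∈ Finset.range (k + 1), (1 : ℝ) / 2 ^ gg i with hT
  set R : ℝ := ∑' i : ℕ, (1 : ℝ) / 2 ^ gg (i + (k + 1)) with hR
  have hSTR : S = T + R := hsplit.symm
  have hRpos : 0 < R := by
    refine Summable.tsum_pos (summable_f.comp_injective (fun x y h => by omega)) (fun i => by positivity) 0 ?_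
    positivity
  have hRle : R ≤ 2 / 2 ^ gg (k + 1) := by
    have hle : ∀ i : ℕ, (1 : ℝ) / 2 ^ gg (i + (k + 1)) ≤ (1 / 2 ^ gg (k + 1)) * (1/2)^i := by
      intro i
      have he : (1:ℝ) / 2 ^ gg (k+1) * (1/2)^i = 1 / 2 ^ (gg (k+1) + i) := by
        rw [div_pow, one_pow, pow_add]; ring
      rw [he]
      apply div_le_div_of_nonneg_left (by norm_num) (by positivity)
      exact pow_le_pow_right₀ (by norm_num) (gg_mono_add (k+1) i)
    calc R ≤ ∑' i : ℕ, (1 / 2 ^ gg (k + 1)) * (1/2:ℝ)^i := by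
            refine Summable.tsum_le_tsum hle (summable_f.comp_injective (fun x y h => by omega)) ?_
            exact (summable_geometric_of_lt_one (by norm_num) (by norm_num)).mul_left _
      _ = (1 / 2 ^ gg (k + 1)) * (1 - 1/2)⁻¹ := by
            rw [tsum_mul_left, tsum_geometric_of_lt_one (by norm_num) (by norm_num)]
      _ = 2 / 2 ^ gg (k + 1) := by
            rw [div_mul_eq_mul_div]
            norm_num
  set z : ℤ := q.num * 2 ^ gg k - ∑ i ∈ Finset.range (k + 1), (q.den : ℤ) * 2 ^ (gg k - gg i) with hz
  have hden : ((q.den : ℝ)) ≠ 0 := Nat.cast_ne_zero.mpr q.den_nz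
  have hDS : (q.den : ℝ) * 2 ^ gg k * S = (q.num : ℝ) * 2 ^ gg k := by
    rw [← hq, Rat.cast_def]
    field_simp
  have hDT : (q.den : ℝ) * 2 ^ gg k * T =
      ∑ i ∈ Finset.range (k + 1), (q.den : ℝ) * 2 ^ (gg k - gg i) := by
    rw [hT, Finset.mul_sum]
    apply Finset.sum_congr rfl
    intro i hi
    have hik : i ≤ k := Nat.lt_succ_iff.mp (Finset.mem_range.mp hi)
    have hgle : gg i ≤ gg k := by
      have h2 := gg_mono_add i (k - i)
      have h3 : k - i + i = k := by omega
      rw [h3] at h2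
      omega
    have hpow : (2:ℝ) ^ gg k = 2 ^ (gg k - gg i) * 2 ^ gg i := by
      rw [← pow_add, Nat.sub_add_cancel hgle]
    rw [hpow]
    field_simp
  have hzR : (z : ℝ) = (q.den : ℝ) * 2 ^ gg k * R := by
    have h4 : (q.den : ℝ) * 2 ^ gg k * R =
        (q.den : ℝ) * 2 ^ gg k * S - (q.den : ℝ) * 2 ^ gg k * T := by
      rw [hSTR]; ring
    rw [h4, hDS, hDT, hz]
    push_cast
    ring
  have hzpos : 0 < z := by
    have h5 : (0:ℝ) < (z:ℝ) := by
      rw [hzR]; positivity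
    exact_mod_cast h5
  have hzlt : (z : ℝ) < 1 := by
    rw [hzR]
    calc (q.den : ℝ) * 2 ^ gg k * R ≤ (q.den : ℝ) * 2 ^ gg k * (2 / 2 ^ gg (k + 1)) := by
          apply mul_le_mul_of_nonneg_left hRle (by positivity)
      _ = (q.den : ℝ) * 2 / 2 ^ (2 * k + 7) := by
          rw [gg_succ, pow_add]
          field_simp
      _ < 1 := by
          rw [div_lt_one (by positivity)]
          have h1 : ((q.den : ℝ)) < 2 ^ k := by
            rw [hk]; exact_mod_cast Nat.lt_two_pow_self (n := q.den)
          have h2 : (2:ℝ) ^ k * 2 ≤ 2 ^ (2 * k + 7) := by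
            calc (2:ℝ) ^ k * 2 = 2 ^ (k + 1) := by rw [pow_succ]
              _ ≤ 2 ^ (2 * k + 7) := by
                  apply pow_le_pow_right₀ (by norm_num); omega
          nlinarith [pow_pos (show (0:ℝ) < 2 by norm_num) k]
  have h6 : (1:ℝ) ≤ (z:ℝ) := by exact_mod_cast hzpos
  linarith

/-- the number 1/64 − (1/8)·Σ_{k=1}^∞ 2^{−(k²+4k+6)} is irrational. -/
theorem irrational_betti_number :
    Irrational (1 / 64 - (1 / 8) * ∑' k : ℕ, (1 : ℝ) / 2 ^ ((k + 1) ^ 2 + 4 * (k + 1) + 6)) := by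
  have hS : Irrational (∑' k : ℕ, (1 : ℝ) / 2 ^ ((k + 1) ^ 2 + 4 * (k + 1) + 6)) :=
    irrational_S
  have h1 : Irrational (((1/8 : ℚ) : ℝ) * ∑' k : ℕ, (1 : ℝ) / 2 ^ ((k + 1) ^ 2 + 4 * (k + 1) + 6)) :=
    hS.ratCast_mul (by norm_num)
  have h2 := h1.ratCast_sub (q := (1/64 : ℚ))
  convert h2 using 2 <;> norm_num
end

section
/- Let Γ be a countable group acting measurably by measure-preserving transformations on a standard probability space (X, μ), let A, B ⊆ X be measurable sets, and let f : X → [0, ∞] be a measurable function that is constant on Γ-orbits. Then ∫_A f(x)·#{γ ∈ Γ : γ·x ∈ B} dμ(x) = ∫_B f(x)·#{γ ∈ Γ : γ·x ∈ A} dμ(x), where the cardinalities are taken in ℕ ∪ {∞} and the integrals are Lebesgue integrals with values in [0, ∞]. -/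
open MeasureTheory

lemma encard_eq_tsum_indicator {Γ X : Type*} [Monoid Γ] [MulAction Γ X] (B : Set X) (x : X) :
    (({γ : Γ | γ • x ∈ B}).encard : ENNReal) = ∑' γ : Γ, B.indicator 1 (γ • x) := by
  rw [← ENNReal.tsum_set_one]
  rw [tsum_subtype _ (fun _ => (1:ENNReal))]
  rfl

/-- mass-transport principle for a measure-preserving action of a
countable group: ∫_A f·#{γ : γ·x ∈ B} dμ = ∫_B f·#{γ : γ·x ∈ A} dμ for f
measurable, non-negative-extended-real-valued and constant on orbits. -/
theorem mass_transport {Γ X : Type*} [Group Γ] [Countable Γ] [MeasurableSpace X]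
    (μ : Measure X) [IsProbabilityMeasure μ] [MulAction Γ X]
    (hpres : ∀ γ : Γ, MeasurePreserving (fun x : X => γ • x) μ μ)
    (A B : Set X) (hA : MeasurableSet A) (hB : MeasurableSet B)
    (f : X → ENNReal) (hf : Measurable f)
    (horb : ∀ (γ : Γ) (x : X), f (γ • x) = f x) :
    ∫⁻ x in A, f x * ({γ : Γ | γ • x ∈ B}.encard : ENNReal) ∂μ
      = ∫⁻ x in B, f x * ({γ : Γ | γ • x ∈ A}.encard : ENNReal) ∂μ := by
  have key : ∀ (A B : Set X), MeasurableSet A → MeasurableSet B →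
      ∫⁻ x in A, f x * ({γ : Γ | γ • x ∈ B}.encard : ENNReal) ∂μ
        = ∑' γ : Γ, ∫⁻ x, f x * (A.indicator 1 x * B.indicator 1 (γ • x)) ∂μ := by
    intro A B hA hB
    have hmeas : ∀ γ : Γ, Measurable fun x => f x * (A.indicator 1 x * B.indicator 1 (γ • x)) := by
      intro γ
      exact hf.mul ((measurable_one.indicator hA).mul
        ((measurable_one.indicator hB).comp (hpres γ).measurable))
    calc ∫⁻ x in A, f x * ({γ : Γ | γ • x ∈ B}.encard : ENNReal) ∂μ
        = ∫⁻ x, A.indicator (fun x => f x * ({γ : Γ | γ • x ∈ B}.encard : ENNReal)) x ∂μ := by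
          exact (lintegral_indicator hA _).symm
      _ = ∫⁻ x, ∑' γ : Γ, f x * (A.indicator 1 x * B.indicator 1 (γ • x)) ∂μ := by
          congr 1; ext x
          by_cases hx : x ∈ A
          · simp only [Set.indicator_of_mem hx, encard_eq_tsum_indicator,
              ENNReal.tsum_mul_left, Pi.one_apply, one_mul]
          · simp [Set.indicator_of_notMem hx]
      _ = ∑' γ : Γ, ∫⁻ x, f x * (A.indicator 1 x * B.indicator 1 (γ • x)) ∂μ :=
          lintegral_tsum fun γ => (hmeas γ).aemeasurable
  rw [key A B hA hB, key B A hB hA]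
  rw [← Equiv.tsum_eq (Equiv.inv Γ) (fun γ => ∫⁻ x, f x * (B.indicator 1 x * A.indicator 1 (γ • x)) ∂μ)]
  congr 1; ext γ
  have := (hpres γ⁻¹).lintegral_comp
    (f := fun x => f x * (A.indicator 1 x * B.indicator 1 (γ • x)))
    (hf.mul ((measurable_one.indicator hA).mul
        ((measurable_one.indicator hB).comp (hpres γ).measurable)))
  rw [← this]
  congr 1; ext x
  simp only [Equiv.inv_apply, horb, smul_inv_smul]
  ring
end

section
/- If a Turing dynamical system (X, T_X) has disjoint accepting chains, then its first and second fundamental values are equal: Ω_1(T_X) = Ω_2(T_X). -/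
open MeasureTheory

noncomputable section

attribute [local instance] Classical.propDecidable

/-- A Turing dynamical system: a measure-preserving right action ρ of Γ on a
probability space (X, μ), a finite measurable partition of X into pieces, disjoint
distinguished sets I, A, R each a union of pieces, and a group element for each piece,
neutral on pieces contained in A ∪ R. -/
structure TuringSystem (X : Type*) [MeasurableSpace X] (μ : Measure X)
    (Γ : Type*) [Group Γ] where
  /-- the right action: `ρ γ x` is x·γ -/
  ρ : Γ → X ≃ᵐ X
  ρ_one : ρ 1 = MeasurableEquiv.refl X
  /-- right action: x·(γδ) = (x·γ)·δ -/
  ρ_mul : ∀ γ δ : Γ, ρ (γ * δ) = (ρ γ).trans (ρ δ)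
  ρ_pres : ∀ γ : Γ, MeasurePreserving (ρ γ) μ μ
  n : ℕ
  piece : Fin n → Set X
  piece_meas : ∀ i, MeasurableSet (piece i)
  piece_disj : ∀ i j, i ≠ j → Disjoint (piece i) (piece j)
  piece_cover : ⋃ i, piece i = Set.univ
  I : Set X
  A : Set X
  R : Set X
  I_pieces : ∃ s : Finset (Fin n), I = ⋃ i ∈ s, piece i
  A_pieces : ∃ s : Finset (Fin n), A = ⋃ i ∈ s, piece i
  R_pieces : ∃ s : Finset (Fin n), R = ⋃ i ∈ s, piece i
  disj_IA : Disjoint I A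
  disj_IR : Disjoint I R
  disj_AR : Disjoint A R
  elt : Fin n → Γ
  elt_one : ∀ i, piece i ⊆ A ∪ R → elt i = 1

namespace TuringSystem

variable {X : Type*} [MeasurableSpace X] {μ : Measure X} {Γ : Type*} [Group Γ]
variable (S : TuringSystem X μ Γ)

lemma exists_piece (x : X) : ∃ i, x ∈ S.piece i := by
  have hx : x ∈ ⋃ i, S.piece i := S.piece_cover.symm ▸ Set.mem_univ x
  exact Set.mem_iUnion.mp hx

/-- the Turing map T_X -/
def map (x : X) : X := S.ρ (S.elt (S.exists_piece x).choose) x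

/-- T_X^∞(x) is defined, i.e. the trajectory of x reaches a fixed point -/
def Halts (x : X) : Prop := ∃ k : ℕ, S.map (S.map^[k] x) = S.map^[k] x

/-- T_X^∞(x) (defined as x itself when the trajectory never stabilizes) -/
def limitPt (x : X) : X := if h : S.Halts x then S.map^[h.choose] x else x

/-- the first fundamental set 𝓕₁ -/
def F1 : Set X :=
  {x ∈ S.I | S.Halts x ∧ S.limitPt x ∈ S.A ∧ ∀ y : X, S.map y ≠ x}

/-- the second fundamental set 𝓕₂ = T_X^∞(𝓕₁) -/
def F2 : Set X := S.limitPt '' S.F1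

/-- the first fundamental value Ω₁ -/
def Omega1 : ENNReal := μ S.F1

/-- the second fundamental value Ω₂ -/
def Omega2 : ENNReal := μ S.F2

/-- the system stops on any configuration -/
def StopsAlways : Prop := ∀ᵐ x ∂μ, S.Halts x ∧ S.limitPt x ∈ S.A ∪ S.R

/-- the system does not restart -/
def DoesNotRestart : Prop := μ (Set.range S.map ∩ S.I) = 0

/-- the system has disjoint accepting chains -/
def DisjointAcceptingChains : Prop :=
  ∃ Z : Set X, μ Z = 0 ∧ Set.InjOn S.limitPt (S.F1 \ Z)

end TuringSystem

namespace TuringSystem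

variable {X : Type*} [MeasurableSpace X] {μ : Measure X} {Γ : Type*} [Group Γ]
variable (S : TuringSystem X μ Γ)

lemma map_eq {x : X} {i : Fin S.n} (hx : x ∈ S.piece i) :
    S.map x = S.ρ (S.elt i) x := by
  have hj := (S.exists_piece x).choose_spec
  have hji : (S.exists_piece x).choose = i := by
    by_contra hne
    exact Set.disjoint_left.mp (S.piece_disj _ _ hne) hj hx
  rw [map, hji]

lemma measurable_map : Measurable S.map := by
  intro s hs
  have heq : S.map ⁻¹' s = ⋃ i, S.piece i ∩ (S.ρ (S.elt i)) ⁻¹' s := by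
    ext x
    simp only [Set.mem_preimage, Set.mem_iUnion, Set.mem_inter_iff]
    constructor
    · intro hx
      obtain ⟨i, hi⟩ := S.exists_piece x
      exact ⟨i, hi, by rwa [← S.map_eq hi]⟩
    · rintro ⟨i, hi, hxs⟩
      rwa [S.map_eq hi]
  rw [heq]
  exact MeasurableSet.iUnion fun i =>
    (S.piece_meas i).inter ((S.ρ (S.elt i)).measurable hs)

lemma map_fix {x : X} (hx : x ∈ S.A) : S.map x = x := by
  obtain ⟨i, hi⟩ := S.exists_piece x
  obtain ⟨s, hs⟩ := S.A_pieces
  have hiA : S.piece i ⊆ S.A := by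
    rw [hs] at hx ⊢
    obtain ⟨j, hj, hxj⟩ := Set.mem_iUnion₂.mp hx
    have hij : i = j := by
      by_contra hne
      exact Set.disjoint_left.mp (S.piece_disj _ _ hne) hi hxj
    exact hij ▸ Set.subset_iUnion₂ (s := fun i _ => S.piece i) j hj
  have h1 : S.elt i = 1 := S.elt_one i (hiA.trans Set.subset_union_left)
  rw [S.map_eq hi, h1, S.ρ_one]
  rfl

lemma limitPt_eq {x : X} {k : ℕ} (hk : S.map^[k] x ∈ S.A) :
    S.Halts x ∧ S.limitPt x = S.map^[k] x := by
  have hfix : S.map (S.map^[k] x) = S.map^[k] x := S.map_fix hk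
  have hH : S.Halts x := ⟨k, hfix⟩
  refine ⟨hH, ?_⟩
  rw [limitPt, dif_pos hH]
  have hfix' : S.map (S.map^[hH.choose] x) = S.map^[hH.choose] x := hH.choose_spec
  rcases le_total k hH.choose with hle | hle
  · calc S.map^[hH.choose] x = S.map^[hH.choose - k] (S.map^[k] x) := by
          rw [← Function.iterate_add_apply, Nat.sub_add_cancel hle]
      _ = S.map^[k] x := Function.iterate_fixed hfix _
  · refine (?_ : S.map^[k] x = _).symm
    calc S.map^[k] x = S.map^[k - hH.choose] (S.map^[hH.choose] x) := by
          rw [← Function.iterate_add_apply, Nat.sub_add_cancel hle]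
      _ = S.map^[hH.choose] x := Function.iterate_fixed hfix' _

lemma A_meas : MeasurableSet S.A := by
  obtain ⟨s, hs⟩ := S.A_pieces
  rw [hs]
  exact MeasurableSet.biUnion s.countable_toSet fun i _ => S.piece_meas i

lemma I_meas : MeasurableSet S.I := by
  obtain ⟨s, hs⟩ := S.I_pieces
  rw [hs]
  exact MeasurableSet.biUnion s.countable_toSet fun i _ => S.piece_meas i

lemma range_meas : MeasurableSet (Set.range S.map) := by
  have heq : Set.range S.map = ⋃ i, S.ρ (S.elt i) '' S.piece i := by
    ext y
    simp only [Set.mem_range, Set.mem_iUnion, Set.mem_image]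
    constructor
    · rintro ⟨x, rfl⟩
      obtain ⟨i, hi⟩ := S.exists_piece x
      exact ⟨i, x, hi, (S.map_eq hi).symm⟩
    · rintro ⟨i, x, hi, rfl⟩
      exact ⟨x, S.map_eq hi⟩
  rw [heq]
  exact MeasurableSet.iUnion fun i =>
    (S.ρ (S.elt i)).measurableSet_image.mpr (S.piece_meas i)

lemma F1_eq : S.F1 = S.I ∩ (⋃ k : ℕ, S.map^[k] ⁻¹' S.A) ∩ (Set.range S.map)ᶜ := by
  ext x
  simp only [F1, Set.mem_setOf_eq, Set.mem_inter_iff, Set.mem_iUnion, Set.mem_preimage,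
    Set.mem_compl_iff, Set.mem_range, not_exists]
  constructor
  · rintro ⟨hI, hH, hA, hr⟩
    refine ⟨⟨hI, hH.choose, ?_⟩, fun y hy => hr y hy⟩
    rw [limitPt, dif_pos hH] at hA
    exact hA
  · rintro ⟨⟨hI, k, hk⟩, hr⟩
    obtain ⟨hH, hlim⟩ := S.limitPt_eq hk
    exact ⟨hI, hH, hlim ▸ hk, hr⟩

lemma F1_meas : MeasurableSet S.F1 := by
  rw [S.F1_eq]
  exact ((S.I_meas.inter (MeasurableSet.iUnion fun k =>
    (S.measurable_map.iterate k) S.A_meas))).inter S.range_meas.compl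

/-- cylinder sets: itinerary follows the word w -/
def cyl (S : TuringSystem X μ Γ) : List (Fin S.n) → Set X
  | [] => Set.univ
  | i :: w => S.piece i ∩ S.map ⁻¹' (cyl S w)

lemma cyl_meas (S : TuringSystem X μ Γ) : ∀ w, MeasurableSet (S.cyl w)
  | [] => MeasurableSet.univ
  | i :: w => (S.piece_meas i).inter (S.measurable_map (cyl_meas S w))

lemma cyl_iterate (S : TuringSystem X μ Γ) : ∀ (w : List (Fin S.n)) {x : X}, x ∈ S.cyl w →
    S.map^[w.length] x = S.ρ (w.map S.elt).prod x
  | [], x, _ => by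
    simp only [List.length_nil, Function.iterate_zero, id_eq, List.map_nil,
      List.prod_nil, S.ρ_one]
    rfl
  | i :: w, x, hx => by
    obtain ⟨hi, hw⟩ := hx
    simp only [List.length_cons, List.map_cons, List.prod_cons]
    rw [Function.iterate_succ_apply, cyl_iterate S w hw, S.map_eq hi, S.ρ_mul,
      MeasurableEquiv.trans_apply]

lemma cyl_cover (k : ℕ) (x : X) : ∃ w : List (Fin S.n), w.length = k ∧ x ∈ S.cyl w := by
  induction k generalizing x with
  | zero => exact ⟨[], rfl, Set.mem_univ x⟩
  | succ k ih =>
    obtain ⟨i, hi⟩ := S.exists_piece x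
    obtain ⟨w, hlen, hw⟩ := ih (S.map x)
    exact ⟨i :: w, by simp [hlen], ⟨hi, hw⟩⟩

lemma cyl_disj (S : TuringSystem X μ Γ) : ∀ (w w' : List (Fin S.n)), w.length = w'.length → w ≠ w' →
    Disjoint (S.cyl w) (S.cyl w')
  | [], [], _, h => absurd rfl h
  | [], _ :: _, hlen, _ => by simp at hlen
  | _ :: _, [], hlen, _ => by simp at hlen
  | i :: w, i' :: w', hlen, hne => by
    by_cases hii : i = i'
    · subst hii
      have hww : w ≠ w' := fun hw => hne (by rw [hw])
      have hlen' : w.length = w'.length := by simpa using hlen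
      exact ((cyl_disj S w w' hlen' hww).preimage S.map).mono
        Set.inter_subset_right Set.inter_subset_right
    · exact (S.piece_disj i i' hii).mono Set.inter_subset_left Set.inter_subset_left

/-- first arrival at A along the itinerary w -/
def block (w : List (Fin S.n)) : Set X :=
  (S.cyl w ∩ S.map^[w.length] ⁻¹' S.A) ∩
    ⋂ j ∈ Finset.range w.length, S.map^[j] ⁻¹' S.Aᶜ

lemma block_meas (w : List (Fin S.n)) : MeasurableSet (S.block w) :=
  ((S.cyl_meas w).inter ((S.measurable_map.iterate _) S.A_meas)).inter
    (MeasurableSet.biInter (Finset.range w.length).countable_toSet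
      fun j _ => (S.measurable_map.iterate j) S.A_meas.compl)

lemma block_disj_lt {w w' : List (Fin S.n)} (hlt : w.length < w'.length) :
    Disjoint (S.block w) (S.block w') := by
  rw [Set.disjoint_left]
  rintro x ⟨⟨_, hA⟩, _⟩ ⟨_, hN'⟩
  have hm := Set.mem_iInter₂.mp hN' w.length (Finset.mem_range.mpr hlt)
  exact hm hA

lemma block_disj {w w' : List (Fin S.n)} (hne : w ≠ w') :
    Disjoint (S.block w) (S.block w') := by
  rcases lt_trichotomy w.length w'.length with hlt | heq | hlt
  · exact S.block_disj_lt hlt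
  · exact (S.cyl_disj w w' heq hne).mono
      (Set.inter_subset_left.trans Set.inter_subset_left)
      (Set.inter_subset_left.trans Set.inter_subset_left)
  · exact (S.block_disj_lt hlt).symm

lemma F1_subset_blocks : S.F1 ⊆ ⋃ w, S.block w := by
  intro x hx
  obtain ⟨_, hH, hA, _⟩ := hx
  have hex : ∃ k, S.map^[k] x ∈ S.A := by
    refine ⟨hH.choose, ?_⟩
    rw [limitPt, dif_pos hH] at hA
    exact hA
  obtain ⟨w, hlen, hw⟩ := S.cyl_cover (Nat.find hex) x
  refine Set.mem_iUnion.mpr ⟨w, ⟨⟨hw, ?_⟩, ?_⟩⟩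
  · show S.map^[w.length] x ∈ S.A
    rw [hlen]
    exact Nat.find_spec hex
  · refine Set.mem_iInter₂.mpr fun j hj => ?_
    rw [Finset.mem_range, hlen] at hj
    exact Nat.find_min hex hj

lemma limitPt_on_block {w : List (Fin S.n)} {x : X} (hx : x ∈ S.block w) :
    S.limitPt x = S.ρ (w.map S.elt).prod x := by
  obtain ⟨⟨hc, hA⟩, _⟩ := hx
  rw [(S.limitPt_eq hA).2, S.cyl_iterate w hc]

lemma image_measure {g : Γ} {s : Set X} (hs : MeasurableSet s) :
    μ (S.ρ g '' s) = μ s := by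
  rw [MeasurableEquiv.image_eq_preimage_symm]
  exact ((S.ρ_pres g).symm (S.ρ g)).measure_preimage hs.nullMeasurableSet

end TuringSystem

/-- a Turing dynamical system with disjoint accepting chains has equal
first and second fundamental values. -/
theorem fundamental_values_eq {X : Type*} [MeasurableSpace X] {μ : Measure X}
    [IsProbabilityMeasure μ] {Γ : Type*} [Group Γ] (S : TuringSystem X μ Γ)
    (h : S.DisjointAcceptingChains) :
    S.Omega1 = S.Omega2 := by
  obtain ⟨Z, hZ0, hinj⟩ := h
  set Z' := toMeasurable μ Z with hZ'def
  have hZ'0 : μ Z' = 0 := by rw [hZ'def, measure_toMeasurable]; exact hZ0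
  have hinj' : Set.InjOn S.limitPt (S.F1 \ Z') :=
    hinj.mono (Set.diff_subset_diff_right (subset_toMeasurable μ Z))
  have hF1m : MeasurableSet S.F1 := S.F1_meas
  set E : List (Fin S.n) → Set X := fun w => (S.F1 \ Z') ∩ S.block w with hE
  set G : List (Fin S.n) → Set X := fun w => S.F1 ∩ S.block w with hG
  have hEmeas : ∀ w, MeasurableSet (E w) := fun w =>
    (hF1m.diff (measurableSet_toMeasurable μ Z)).inter (S.block_meas w)
  have hGmeas : ∀ w, MeasurableSet (G w) := fun w => hF1m.inter (S.block_meas w)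
  have hGdisj : Pairwise (Function.onFun Disjoint G) := fun w w' hne =>
    (S.block_disj hne).mono Set.inter_subset_right Set.inter_subset_right
  have hEdisj : Pairwise (Function.onFun Disjoint E) := fun w w' hne =>
    (S.block_disj hne).mono Set.inter_subset_right Set.inter_subset_right
  have hup : S.Omega2 ≤ S.Omega1 := by
    have hsub : S.F2 ⊆ ⋃ w, S.ρ ((w.map S.elt).prod) '' (G w) := by
      rintro _ ⟨x, hx, rfl⟩
      obtain ⟨w, hw⟩ := Set.mem_iUnion.mp (S.F1_subset_blocks hx)
      exact Set.mem_iUnion.mpr ⟨w, ⟨x, ⟨hx, hw⟩, (S.limitPt_on_block hw).symm⟩⟩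
    calc S.Omega2 ≤ μ (⋃ w, S.ρ ((w.map S.elt).prod) '' (G w)) := measure_mono hsub
      _ ≤ ∑' w, μ (S.ρ ((w.map S.elt).prod) '' (G w)) := measure_iUnion_le _
      _ = ∑' w, μ (G w) := tsum_congr fun w => S.image_measure (hGmeas w)
      _ = μ (⋃ w, G w) := (measure_iUnion hGdisj hGmeas).symm
      _ ≤ μ S.F1 := measure_mono (Set.iUnion_subset fun w => Set.inter_subset_left)
  have hlow : S.Omega1 ≤ S.Omega2 := by
    have him : ∀ w, S.ρ ((w.map S.elt).prod) '' (E w) ⊆ S.F2 := by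
      rintro w _ ⟨x, hx, rfl⟩
      exact ⟨x, hx.1.1, (S.limitPt_on_block hx.2).symm ▸ rfl⟩
    have himdisj : Pairwise (Function.onFun Disjoint
        (fun w => S.ρ ((w.map S.elt).prod) '' (E w))) := by
      intro w w' hne
      rw [Function.onFun, Set.disjoint_left]
      rintro _ ⟨x, hx, rfl⟩ ⟨x', hx', heq⟩
      have h1 := S.limitPt_on_block hx.2
      have h2 := S.limitPt_on_block hx'.2
      have hxx : x' = x := hinj' hx'.1 hx.1 (by rw [h1, h2, heq])
      subst hxx
      exact Set.disjoint_left.mp (S.block_disj hne) hx.2 hx'.2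
    have himmeas : ∀ w, MeasurableSet (S.ρ ((w.map S.elt).prod) '' (E w)) := fun w =>
      (S.ρ _).measurableSet_image.mpr (hEmeas w)
    have hEunion : ⋃ w, E w = S.F1 \ Z' := by
      apply Set.Subset.antisymm
      · exact Set.iUnion_subset fun w => Set.inter_subset_left
      · intro x hx
        obtain ⟨w, hw⟩ := Set.mem_iUnion.mp (S.F1_subset_blocks hx.1)
        exact Set.mem_iUnion.mpr ⟨w, hx, hw⟩
    calc S.Omega1 = μ (S.F1 \ Z') := (measure_diff_null hZ'0).symm
      _ = μ (⋃ w, E w) := by rw [hEunion]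
      _ = ∑' w, μ (E w) := measure_iUnion hEdisj hEmeas
      _ = ∑' w, μ (S.ρ ((w.map S.elt).prod) '' (E w)) :=
          tsum_congr fun w => (S.image_measure (hEmeas w)).symm
      _ = μ (⋃ w, S.ρ ((w.map S.elt).prod) '' (E w)) :=
          (measure_iUnion himdisj himmeas).symm
      _ ≤ μ S.F2 := measure_mono (Set.iUnion_subset him)
  exact le_antisymm hlow hup
end
end

section
/- Let V be a finite set and t : V → V a map such that every point is eventually fixed (for each v there is n with t^{n+1}(v) = t^n(v)); let F be the set of fixed points of t, and let I ⊆ V satisfy I ∩ F = ∅ and I ∩ t(V) = ∅. Define the linear map M : ℂ^V → ℂ^V by M(e_v) = e_{t(v)} + e_v for v ∉ I ∪ F and M(e_v) = e_{t(v)} for v ∈ I ∪ F. For u ∈ I, let k(u) be minimal with t^{k(u)+1}(u) = t^{k(u)}(u), and set ξ(u) := Σ_{i=0}^{k(u)} (−1)^i e_{t^i(u)}. Then the vectors {ξ(u) : u ∈ I} are linearly independent and their linear span equals ker M; in particular dim_ℂ ker M = |I|. -/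
noncomputable section

attribute [local instance] Classical.propDecidable

namespace ChainKernel

variable {V : Type*} [Fintype V] [DecidableEq V]

/-- k(u): the minimal n with t^[n+1] u = t^[n] u -/
def stopTime (t : V → V) (u : V) : ℕ := sInf {n : ℕ | t^[n + 1] u = t^[n] u}

/-- ξ(u) = Σ_{i=0}^{k(u)} (−1)^i e_{t^i(u)} -/
def xiVec (t : V → V) (u : V) : V → ℂ :=
  ∑ i ∈ Finset.range (stopTime t u + 1), ((-1 : ℂ)) ^ i • (Pi.single (t^[i] u) (1 : ℂ) : V → ℂ)

/-- the matrix of the linear map M: M(e_v) = e_{t v} + e_v for v ∉ I ∪ F and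
M(e_v) = e_{t v} for v ∈ I ∪ F (F the fixed-point set of t) -/
def opM (t : V → V) (I : Set V) : Matrix V V ℂ :=
  Matrix.of fun u v =>
    (if u = t v then 1 else 0) +
      (if v ∈ I ∪ {w : V | t w = w} then 0 else if u = v then 1 else 0)

end ChainKernel

namespace CKP
open ChainKernel Finset

set_option linter.unusedSectionVars false

variable {V : Type*} [Fintype V] [DecidableEq V]

lemma iter_stable (t : V → V) {u : V} {n : ℕ} (h : t^[n + 1] u = t^[n] u) :
    ∀ m, n ≤ m → t^[m] u = t^[n] u := by
  intro m hm
  induction m, hm using Nat.le_induction with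
  | base => rfl
  | succ m hm ih =>
      rw [Function.iterate_succ_apply', ih, ← Function.iterate_succ_apply' t n u, h]

lemma stop_spec (t : V → V) (hfix : ∀ v : V, ∃ n : ℕ, t^[n + 1] v = t^[n] v) (u : V) :
    t^[stopTime t u + 1] u = t^[stopTime t u] u :=
  Nat.sInf_mem (hfix u)

lemma stop_min (t : V → V) {u : V} {n : ℕ} (hn : n < stopTime t u) :
    t^[n + 1] u ≠ t^[n] u :=
  Nat.notMem_of_lt_sInf hn

lemma fixed_of_periodic (t : V → V) (hfix : ∀ v : V, ∃ n : ℕ, t^[n + 1] v = t^[n] v)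
    {v : V} {m : ℕ} (hm : m ≠ 0) (h : t^[m] v = v) : t v = v := by
  obtain ⟨n, hn⟩ := hfix v
  have hmul : ∀ j, t^[m * j] v = v := by
    intro j
    induction j with
    | zero => simp
    | succ j ih => rw [Nat.mul_succ, Function.iterate_add_apply, h, ih]
  have h1 : 1 ≤ m := Nat.one_le_iff_ne_zero.mpr hm
  have hge : n ≤ m * (n + 1) := by nlinarith
  have hv : t^[n] v = v := by
    have h2 := hmul (n + 1)
    rwa [iter_stable t hn _ hge] at h2
  calc t v = t (t^[n] v) := by rw [hv]
    _ = t^[n + 1] v := (Function.iterate_succ_apply' t n v).symm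
    _ = t^[n] v := hn
    _ = v := hv

lemma mulVec_apply (t : V → V) (I : Set V) (y : V → ℂ) (v : V) :
    (opM t I).mulVec y v =
      (∑ w ∈ univ.filter fun w => v = t w, y w) +
        (if v ∈ I ∪ {w : V | t w = w} then 0 else y v) := by
  simp only [Matrix.mulVec, dotProduct, opM, Matrix.of_apply, add_mul]
  rw [Finset.sum_add_distrib]
  congr 1
  · rw [Finset.sum_filter]
    exact Finset.sum_congr rfl fun w _ => by by_cases h : v = t w <;> simp [h]
  · rw [Finset.sum_eq_single v]
    · by_cases h : v ∈ I ∪ {w : V | t w = w} <;> simp [h]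
    · intro w _ hw
      have : ¬ v = w := fun h => hw h.symm
      simp [this]
    · intro h; exact absurd (Finset.mem_univ v) h

lemma mulVec_single_eq (t : V → V) (I : Set V) (w : V) :
    (opM t I).mulVec (Pi.single w 1) =
      Pi.single (t w) 1 +
        (if w ∈ I ∪ {x : V | t x = x} then 0 else Pi.single w 1) := by
  by_cases h : w ∈ I ∪ {x : V | t x = x}
  · rw [if_pos h]
    funext v
    rw [Matrix.mulVec_single_one]
    simp only [Matrix.col_apply, mul_one, opM, Matrix.of_apply, if_pos h, Pi.add_apply, Pi.zero_apply, add_zero,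
      Pi.single_apply]
  · rw [if_neg h]
    funext v
    rw [Matrix.mulVec_single_one]
    simp only [Matrix.col_apply, mul_one, opM, Matrix.of_apply, if_neg h, Pi.add_apply, Pi.single_apply]

lemma stop_pos (t : V → V) (hfix : ∀ v : V, ∃ n : ℕ, t^[n + 1] v = t^[n] v)
    {u : V} (hu : t u ≠ u) : 1 ≤ stopTime t u := by
  by_contra h
  have h0 : stopTime t u = 0 := by omega
  have hs := stop_spec t hfix u
  rw [h0] at hs
  simp only [Function.iterate_one, Function.iterate_zero, id] at hs
  exact hu hs

lemma xi_mem_ker (t : V → V) (hfix : ∀ v : V, ∃ n : ℕ, t^[n + 1] v = t^[n] v)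
    (I : Set V) (hIF : ∀ v ∈ I, t v ≠ v)
    (hIt : ∀ v ∈ I, v ∉ Set.range t) {u : V} (hu : u ∈ I) :
    (opM t I).mulVec (xiVec t u) = 0 := by
  set k := stopTime t u with hk
  have hk1 : 1 ≤ k := stop_pos t hfix (hIF u hu)
  have hcol0 : (opM t I).mulVec (Pi.single (t^[0] u) 1) = Pi.single (t^[0+1] u) 1 := by
    rw [mulVec_single_eq]
    have hmem : (t^[0] u) ∈ I ∪ {x : V | t x = x} := Or.inl (by simpa using hu)
    rw [if_pos hmem, add_zero]
    congr 1
  have hcolmid : ∀ i, 0 < i → i < k →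
      (opM t I).mulVec (Pi.single (t^[i] u) 1)
        = Pi.single (t^[i+1] u) 1 + Pi.single (t^[i] u) 1 := by
    intro i hi0 hik
    rw [mulVec_single_eq]
    have hnotin : (t^[i] u) ∉ I ∪ {x : V | t x = x} := by
      rintro (hmem | hfixmem)
      · refine hIt _ hmem ⟨t^[i-1] u, ?_⟩
        rw [← Function.iterate_succ_apply' t (i-1) u]
        congr 1
        omega
      · refine stop_min t (hk ▸ hik) ?_
        rw [Function.iterate_succ_apply']
        exact hfixmem
    rw [if_neg hnotin, Function.iterate_succ_apply']
  have hcolk : (opM t I).mulVec (Pi.single (t^[k] u) 1) = Pi.single (t^[k] u) 1 := by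
    rw [mulVec_single_eq]
    have hfixk : t (t^[k] u) = t^[k] u := by
      rw [← Function.iterate_succ_apply' t k u]
      exact hk ▸ stop_spec t hfix u
    have hmem : t^[k] u ∈ I ∪ {x : V | t x = x} := Or.inr hfixk
    rw [if_pos hmem, add_zero, hfixk]
  have hpartial : ∀ m, m < k →
      ∑ i ∈ range (m+1), ((-1:ℂ))^i • (opM t I).mulVec (Pi.single (t^[i] u) (1:ℂ))
        = ((-1:ℂ))^m • (Pi.single (t^[m+1] u) (1:ℂ) : V → ℂ) := by
    intro m
    induction m with
    | zero => intro _; simpa using hcol0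
    | succ m ih =>
        intro hmk
        rw [Finset.sum_range_succ, ih (by omega), hcolmid (m+1) (by omega) hmk]
        rw [smul_add, pow_succ]
        module
  have hxi : (opM t I).mulVec (xiVec t u)
      = ∑ i ∈ range (k+1), ((-1:ℂ))^i • (opM t I).mulVec (Pi.single (t^[i] u) (1:ℂ)) := by
    unfold xiVec
    rw [← hk, ← Matrix.mulVecLin_apply, map_sum]
    simp only [map_smul, Matrix.mulVecLin_apply]
  obtain ⟨m, hm⟩ : ∃ m, k = m + 1 := ⟨k-1, by omega⟩
  rw [hxi, hm, Finset.sum_range_succ, hpartial m (by omega), ← hm, hcolk, hm, pow_succ]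
  module

def ancestors (t : V → V) (v : V) : Finset V :=
  univ.filter fun w => w ≠ v ∧ ∃ n, t^[n] w = v

lemma ancestors_ssubset (t : V → V) (hfix : ∀ v : V, ∃ n : ℕ, t^[n + 1] v = t^[n] v)
    {w v : V} (h : t w = v) (hwv : w ≠ v) :
    ancestors t w ⊂ ancestors t v := by
  constructor
  · intro x hx
    simp only [ancestors, mem_filter, mem_univ, true_and] at hx ⊢
    obtain ⟨hxw, n, hn⟩ := hx
    refine ⟨?_, n+1, by rw [Function.iterate_succ_apply', hn, h]⟩
    rintro rfl
    have hcyc : t^[n+1] x = x := by rw [Function.iterate_succ_apply', hn, h]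
    have hfx : t x = x := fixed_of_periodic t hfix (by omega) hcyc
    have hvn : ∀ m, t^[m] x = x := by
      intro m
      induction m with
      | zero => rfl
      | succ m ih => rw [Function.iterate_succ_apply', ih, hfx]
    exact hxw (((hvn n).symm.trans hn).symm).symm
  · intro hsub
    have hw : w ∈ ancestors t v := by
      simp only [ancestors, mem_filter, mem_univ, true_and]
      exact ⟨hwv, 1, by simpa using h⟩
    have := hsub hw
    simp [ancestors] at this

lemma ker_vanish (t : V → V) (hfix : ∀ v : V, ∃ n : ℕ, t^[n + 1] v = t^[n] v)
    (I : Set V) {y : V → ℂ}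
    (hy : (opM t I).mulVec y = 0) (hyI : ∀ v ∈ I, y v = 0) : y = 0 := by
  have key : ∀ n (v : V), (ancestors t v).card < n → y v = 0 := by
    intro n
    induction n with
    | zero => intro v hv; omega
    | succ n ih =>
      intro v hv
      by_cases hvI : v ∈ I
      · exact hyI v hvI
      have hrel := congrFun hy v
      rw [mulVec_apply] at hrel
      simp only [Pi.zero_apply] at hrel
      have hterm : ∀ w, v = t w → w ≠ v → y w = 0 := by
        intro w hw1 hw2
        have hss := ancestors_ssubset t hfix hw1.symm hw2
        have hlt := Finset.card_lt_card hss
        exact ih w (by omega)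
      by_cases hvF : t v = v
      · have hmemF : v ∈ I ∪ {w : V | t w = w} := Or.inr hvF
        rw [if_pos hmemF, add_zero] at hrel
        have hmem : v ∈ univ.filter (fun w => v = t w) :=
          Finset.mem_filter.mpr ⟨Finset.mem_univ v, hvF.symm⟩
        rw [← Finset.sum_erase_add _ _ hmem] at hrel
        have herase : ∀ w ∈ (univ.filter fun w => v = t w).erase v, y w = 0 := by
          intro w hw
          rw [Finset.mem_erase] at hw
          have hw2 := hw.2
          simp only [mem_filter, mem_univ, true_and] at hw2
          exact hterm w hw2 hw.1
        rw [Finset.sum_eq_zero herase, zero_add] at hrel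
        exact hrel
      · have hnot : v ∉ I ∪ {w : V | t w = w} := by
          rintro (h | h)
          exacts [hvI h, hvF h]
        rw [if_neg hnot] at hrel
        have hzero : ∀ w ∈ univ.filter (fun w => v = t w), y w = 0 := by
          intro w hw
          simp only [mem_filter, mem_univ, true_and] at hw
          refine hterm w hw fun hwv => hvF ?_
          rw [hwv] at hw
          exact hw.symm
        rw [Finset.sum_eq_zero hzero, zero_add] at hrel
        exact hrel
  funext v
  exact key ((ancestors t v).card + 1) v (by omega)

lemma xiVec_apply_I (t : V → V) (I : Set V) (hIt : ∀ v ∈ I, v ∉ Set.range t)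
    {u u' : V} (hu' : u' ∈ I) :
    xiVec t u u' = if u' = u then 1 else 0 := by
  unfold xiVec
  rw [Finset.sum_apply, Finset.sum_eq_single 0]
  · simp [Pi.single_apply]
  · intro i hi hi0
    have hne : u' ≠ t^[i] u := by
      intro h
      refine hIt u' hu' ?_
      obtain ⟨j, rfl⟩ : ∃ j, i = j + 1 := ⟨i-1, by omega⟩
      exact ⟨t^[j] u, by rw [h, Function.iterate_succ_apply']⟩
    simp [Pi.single_apply, hne]
  · intro h
    simp at h

end CKP

open ChainKernel in
/-- for an eventually-fixed map t on a finite set V, and I avoiding both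
the fixed points and the image of t, the vectors ξ(u), u ∈ I, are linearly independent
and span the kernel of M; in particular dim ker M = |I|. -/
theorem kernel_of_chain_operator {V : Type*} [Fintype V] [DecidableEq V]
    (t : V → V) (hfix : ∀ v : V, ∃ n : ℕ, t^[n + 1] v = t^[n] v)
    (I : Set V) (hIF : ∀ v ∈ I, t v ≠ v) (hIt : ∀ v ∈ I, v ∉ Set.range t) :
    LinearIndependent ℂ (fun u : I => xiVec t (u : V)) ∧
      Submodule.span ℂ (Set.range fun u : I => xiVec t (u : V))
        = LinearMap.ker (opM t I).mulVecLin ∧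
      Module.finrank ℂ (LinearMap.ker (opM t I).mulVecLin) = Nat.card I := by
  have hF : ∀ u : V, u ∈ I → (opM t I).mulVecLin (xiVec t u) = 0 := fun u hu => by
    rw [Matrix.mulVecLin_apply]
    exact CKP.xi_mem_ker t hfix I hIF hIt hu
  -- evaluation of sums of xiVec's at points of I
  have heval : ∀ (g : I → ℂ) (u0 : I),
      (∑ u : I, g u • xiVec t (u : V)) (u0 : V) = g u0 := by
    intro g u0
    rw [Finset.sum_apply]
    have hterms : ∀ u : I, (g u • xiVec t (u : V)) (u0 : V)
        = if u0 = u then g u else 0 := by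
      intro u
      rw [Pi.smul_apply, CKP.xiVec_apply_I t I hIt u0.2, smul_eq_mul]
      by_cases h : u0 = u
      · rw [if_pos h, if_pos (by rw [h]), mul_one]
      · rw [if_neg h, if_neg (fun hc => h (Subtype.ext hc)), mul_zero]
    rw [Finset.sum_congr rfl fun u _ => hterms u, Finset.sum_ite_eq Finset.univ u0 g,
      if_pos (Finset.mem_univ u0)]
  have hind : LinearIndependent ℂ (fun u : I => xiVec t (u : V)) := by
    rw [Fintype.linearIndependent_iff]
    intro g hg u0
    have := congrFun hg (u0 : V)
    rw [heval g u0] at this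
    simpa using this
  have hspan : Submodule.span ℂ (Set.range fun u : I => xiVec t (u : V))
      = LinearMap.ker (opM t I).mulVecLin := by
    apply le_antisymm
    · rw [Submodule.span_le]
      rintro _ ⟨u, rfl⟩
      exact LinearMap.mem_ker.mpr (hF u u.2)
    · intro x hx
      set s : V → ℂ := ∑ u : I, x (u : V) • xiVec t (u : V) with hs
      have hsker : (opM t I).mulVecLin s = 0 := by
        rw [hs, map_sum]
        exact Finset.sum_eq_zero fun u _ => by rw [map_smul, hF u u.2, smul_zero]
      have hdiff : x - s = 0 := by
        apply CKP.ker_vanish t hfix I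
        · have h0 : (opM t I).mulVecLin (x - s) = 0 := by
            rw [map_sub, LinearMap.mem_ker.mp hx, hsker, sub_zero]
          rwa [Matrix.mulVecLin_apply] at h0
        · intro v hv
          have hsv : s v = x v := heval (fun u => x (u : V)) ⟨v, hv⟩
          simp [Pi.sub_apply, hsv]
      have hxs : x = s := by rwa [sub_eq_zero] at hdiff
      rw [hxs, hs]
      exact Submodule.sum_mem _ fun u _ =>
        Submodule.smul_mem _ _ (Submodule.subset_span ⟨u, rfl⟩)
  refine ⟨hind, hspan, ?_⟩
  rw [← hspan, finrank_span_eq_card hind, Nat.card_eq_fintype_card]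
end
end

section
/- For countable discrete groups G and H: (i) the set 𝒞(G) is closed under addition, and (ii) if a ∈ 𝒞(G) and b ∈ 𝒞(H), then a + b ∈ 𝒞(G × H). -/
open scoped BigOperators

noncomputable section

namespace L2B

variable {G : Type*} [Group G]

/-- trace on matrices over ℚG : sum of coefficients of identity on the diagonal -/
def mTrace {k : ℕ} (T : Matrix (Fin k) (Fin k) (MonoidAlgebra ℚ G)) : ℚ :=
  ∑ i, (T i i).coeff (1 : G)

/-- adjoint of a matrix over ℚG -/
def mAdj {k : ℕ} (T : Matrix (Fin k) (Fin k) (MonoidAlgebra ℚ G)) :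
    Matrix (Fin k) (Fin k) (MonoidAlgebra ℚ G) :=
  fun i j => MonoidAlgebra.ofCoeff (Finsupp.mapDomain (fun g : G => g⁻¹) (T j i).coeff)

/-- ν(T): sum of absolute values of all rational coefficients -/
def mNu {k : ℕ} (T : Matrix (Fin k) (Fin k) (MonoidAlgebra ℚ G)) : ℚ :=
  ∑ i, ∑ j, ∑ g ∈ (T i j).coeff.support, |(T i j).coeff g|

def mC {k : ℕ} (T : Matrix (Fin k) (Fin k) (MonoidAlgebra ℚ G)) : ℚ := mNu T ^ 2 + 1

/-- dim_vN ker T = r -/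
def HasDimKer {k : ℕ} (T : Matrix (Fin k) (Fin k) (MonoidAlgebra ℚ G)) (r : ℝ) : Prop :=
  Filter.Tendsto
    (fun n : ℕ => ((mTrace ((1 - (mC T)⁻¹ • (mAdj T * T)) ^ n) : ℚ) : ℝ))
    Filter.atTop (nhds r)

/-- the set of l²-Betti numbers arising from G -/
def betti (G : Type*) [Group G] : Set ℝ :=
  {r | ∃ (k : ℕ) (T : Matrix (Fin k) (Fin k) (MonoidAlgebra ℚ G)), HasDimKer T r}

end L2B

/- ############ auxiliary development ############ -/

open Filter Finset Matrix

namespace L2BAux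

set_option linter.unusedSectionVars false

/-- Euler (binomial) summation method is regular. -/
lemma euler_summation {t : ℕ → ℝ} {a : ℝ} (ht : Filter.Tendsto t Filter.atTop (nhds a))
    {α : ℝ} (hα0 : 0 ≤ α) (hα1 : α < 1) :
    Filter.Tendsto (fun n => ∑ k ∈ Finset.range (n+1),
      (n.choose k : ℝ) * α ^ k * (1-α) ^ (n-k) * t (n-k)) Filter.atTop (nhds a) := by
  rcases eq_or_lt_of_le hα0 with h0 | hαpos
  · have : ∀ n, ∑ k ∈ Finset.range (n+1),
        (n.choose k : ℝ) * α ^ k * (1-α) ^ (n-k) * t (n-k) = t n := by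
      intro n
      rw [Finset.sum_eq_single 0]
      · simp [← h0]
      · intro k hk hk0
        simp [← h0, zero_pow hk0]
      · simp
    simpa only [this] using ht
  -- main case 0 < α < 1
  set β : ℝ := 1 - α with hβdef
  have hβ0 : 0 < β := by simp [hβdef]; linarith
  have hβ1 : β ≤ 1 := by simp [hβdef]; linarith
  have hw0 : ∀ n k : ℕ, 0 ≤ (n.choose k : ℝ) * α ^ k * β ^ (n-k) := fun n k => by positivity
  have hw1 : ∀ n : ℕ, ∑ k ∈ Finset.range (n+1), (n.choose k : ℝ) * α ^ k * β ^ (n-k) = 1 := by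
    intro n
    have h : (α + β) ^ n = 1 := by simp [hβdef]
    calc ∑ k ∈ Finset.range (n+1), (n.choose k : ℝ) * α ^ k * β ^ (n-k)
        = ∑ k ∈ Finset.range (n+1), α ^ k * β ^ (n-k) * (n.choose k : ℝ) :=
          Finset.sum_congr rfl fun k _ => by ring
      _ = (α + β) ^ n := (add_pow α β n).symm
      _ = 1 := h
  rw [Metric.tendsto_atTop]
  intro ε hε
  obtain ⟨N₀, hN₀⟩ := Metric.tendsto_atTop.1 ht (ε/2) (by linarith)
  set N₁ : ℕ := N₀ + 1 with hN₁def
  have hN₁ : ∀ j, N₁ ≤ j → |t j - a| ≤ ε/2 := by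
    intro j hj
    have := hN₀ j (by omega)
    rw [Real.dist_eq] at this
    linarith
  set M : ℝ := 1 + ∑ j ∈ Finset.range N₁, |t j - a| with hMdef
  have hM1 : 1 ≤ M := by
    have : 0 ≤ ∑ j ∈ Finset.range N₁, |t j - a| :=
      Finset.sum_nonneg fun j _ => abs_nonneg _
    linarith
  have hMb : ∀ j, j < N₁ → |t j - a| ≤ M := by
    intro j hj
    have h1 : |t j - a| ≤ ∑ i ∈ Finset.range N₁, |t i - a| :=
      Finset.single_le_sum (f := fun i => |t i - a|) (fun i _ => abs_nonneg _)
        (Finset.mem_range.2 hj)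
    linarith
  -- the tail bound sequence
  have hαne : α ≠ 0 := ne_of_gt hαpos
  have hφ : Filter.Tendsto (fun n : ℕ => (N₁ : ℝ) * ((n:ℝ) ^ N₁ * α ^ (n - N₁) * M))
      Filter.atTop (nhds 0) := by
    have hsum : Filter.Tendsto (fun n : ℕ => (n:ℝ) ^ N₁ * α ^ n) Filter.atTop (nhds 0) := by
      have := (summable_pow_mul_geometric_of_norm_lt_one (R := ℝ) N₁
        (by rwa [Real.norm_eq_abs, abs_of_nonneg hα0])).tendsto_atTop_zero
      simpa using this
    have h2 : Filter.Tendsto (fun n : ℕ =>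
        ((N₁ : ℝ) * (α ^ N₁)⁻¹ * M) * ((n:ℝ) ^ N₁ * α ^ n)) Filter.atTop (nhds 0) := by
      simpa using hsum.const_mul ((N₁ : ℝ) * (α ^ N₁)⁻¹ * M)
    apply h2.congr'
    filter_upwards [Filter.eventually_atTop.2 ⟨N₁, fun n hn => hn⟩] with n hn
    rw [pow_sub₀ α hαne hn]
    ring
  obtain ⟨N₂, hN₂⟩ := Metric.tendsto_atTop.1 hφ (ε/2) (by linarith)
  refine ⟨max N₁ N₂, fun n hn => ?_⟩
  have hnN₁ : N₁ ≤ n := le_trans (le_max_left _ _) hn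
  have hnN₂ : N₂ ≤ n := le_trans (le_max_right _ _) hn
  rw [Real.dist_eq]
  -- rewrite s n - a
  have key : (∑ k ∈ Finset.range (n+1), (n.choose k : ℝ) * α ^ k * β ^ (n-k) * t (n-k)) - a
      = ∑ k ∈ Finset.range (n+1), (n.choose k : ℝ) * α ^ k * β ^ (n-k) * (t (n-k) - a) := by
    rw [Finset.sum_congr rfl (fun k (_ : k ∈ Finset.range (n+1)) =>
      (by ring : (n.choose k : ℝ) * α ^ k * β ^ (n-k) * (t (n-k) - a)
        = (n.choose k : ℝ) * α ^ k * β ^ (n-k) * t (n-k)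
          - (n.choose k : ℝ) * α ^ k * β ^ (n-k) * a)),
      Finset.sum_sub_distrib, ← Finset.sum_mul, hw1 n, one_mul]
  rw [key]
  -- triangle inequality
  have tri : |∑ k ∈ Finset.range (n+1), (n.choose k : ℝ) * α ^ k * β ^ (n-k) * (t (n-k) - a)|
      ≤ ∑ k ∈ Finset.range (n+1), (n.choose k : ℝ) * α ^ k * β ^ (n-k) * |t (n-k) - a| := by
    refine (Finset.abs_sum_le_sum_abs _ _).trans (le_of_eq ?_)
    refine Finset.sum_congr rfl fun k _ => ?_
    rw [abs_mul, abs_of_nonneg (hw0 n k)]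
  -- per-term bound
  have hterm : ∀ k ∈ Finset.range (n+1),
      (n.choose k : ℝ) * α ^ k * β ^ (n-k) * |t (n-k) - a|
      ≤ (n.choose k : ℝ) * α ^ k * β ^ (n-k) * (ε/2)
        + (if n - k < N₁ then (n.choose k : ℝ) * α ^ k * β ^ (n-k) * M else 0) := by
    intro k _
    by_cases h : n - k < N₁
    · rw [if_pos h]
      have h1 : |t (n-k) - a| ≤ M := hMb _ h
      have h2 : 0 ≤ (n.choose k : ℝ) * α ^ k * β ^ (n-k) * (ε/2) := by
        have := hw0 n k; positivity
      nlinarith [hw0 n k]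
    · rw [if_neg h]
      have h1 : |t (n-k) - a| ≤ ε/2 := hN₁ _ (by omega)
      have := hw0 n k
      nlinarith
  have step : ∑ k ∈ Finset.range (n+1), (n.choose k : ℝ) * α ^ k * β ^ (n-k) * |t (n-k) - a|
      ≤ ε/2 + ∑ k ∈ Finset.range (n+1),
          (if n - k < N₁ then (n.choose k : ℝ) * α ^ k * β ^ (n-k) * M else 0) := by
    refine (Finset.sum_le_sum hterm).trans (le_of_eq ?_)
    rw [Finset.sum_add_distrib, ← Finset.sum_mul, hw1 n, one_mul]
  -- bound the tail sum
  have tail : ∑ k ∈ Finset.range (n+1),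
      (if n - k < N₁ then (n.choose k : ℝ) * α ^ k * β ^ (n-k) * M else 0)
      ≤ (N₁ : ℝ) * ((n:ℝ) ^ N₁ * α ^ (n - N₁) * M) := by
    rw [← Finset.sum_range_reflect]
    have heq : ∀ i ∈ Finset.range (n+1),
        (if n - (n + 1 - 1 - i) < N₁ then
          (n.choose (n + 1 - 1 - i) : ℝ) * α ^ (n + 1 - 1 - i) * β ^ (n-(n + 1 - 1 - i)) * M else 0)
        = (if i < N₁ then (n.choose i : ℝ) * α ^ (n - i) * β ^ i * M else 0) := by
      intro i hi
      have hi' : i ≤ n := by have := Finset.mem_range.1 hi; omega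
      have e1 : n + 1 - 1 - i = n - i := by omega
      have e2 : n - (n - i) = i := by omega
      rw [e1, e2, Nat.choose_symm hi']
    rw [Finset.sum_congr rfl heq]
    have hsub : ∀ i ∈ Finset.range (n+1),
        (if i < N₁ then (n.choose i : ℝ) * α ^ (n - i) * β ^ i * M else 0)
        ≤ (if i < N₁ then ((n:ℝ) ^ N₁ * α ^ (n - N₁) * M) else 0) := by
      intro i _
      by_cases h : i < N₁
      · rw [if_pos h, if_pos h]
        have c1 : (n.choose i : ℝ) ≤ (n:ℝ) ^ N₁ := by
          calc (n.choose i : ℝ) ≤ (n:ℝ) ^ i := by exact_mod_cast Nat.choose_le_pow n i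
            _ ≤ (n:ℝ) ^ N₁ := by
              apply pow_le_pow_right₀ _ (le_of_lt h)
              exact_mod_cast Nat.one_le_iff_ne_zero.2 (by omega)
        have c2 : α ^ (n - i) ≤ α ^ (n - N₁) := by
          apply pow_le_pow_of_le_one hα0 hα1.le
          omega
        have c3 : β ^ i ≤ 1 := pow_le_one₀ hβ0.le hβ1
        calc (n.choose i : ℝ) * α ^ (n - i) * β ^ i * M
            ≤ (n:ℝ) ^ N₁ * α ^ (n - N₁) * 1 * M := by
              apply mul_le_mul _ le_rfl (by linarith) (by positivity)
              apply mul_le_mul _ c3 (by positivity) (by positivity)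
              apply mul_le_mul c1 c2 (by positivity) (by positivity)
          _ = (n:ℝ) ^ N₁ * α ^ (n - N₁) * M := by ring
      · rw [if_neg h, if_neg h]
    refine (Finset.sum_le_sum hsub).trans ?_
    rw [← Finset.sum_filter]
    have hfil : Finset.filter (fun i => i < N₁) (Finset.range (n+1)) = Finset.range N₁ := by
      ext i
      simp only [Finset.mem_filter, Finset.mem_range]
      omega
    rw [hfil, Finset.sum_const, Finset.card_range, nsmul_eq_mul]
  have hφn := hN₂ n hnN₂
  rw [Real.dist_eq, sub_zero] at hφn
  have hφn' : (N₁ : ℝ) * ((n:ℝ) ^ N₁ * α ^ (n - N₁) * M) < ε/2 :=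
    lt_of_abs_lt hφn
  calc |∑ k ∈ Finset.range (n+1), (n.choose k : ℝ) * α ^ k * β ^ (n-k) * (t (n-k) - a)|
      ≤ ∑ k ∈ Finset.range (n+1), (n.choose k : ℝ) * α ^ k * β ^ (n-k) * |t (n-k) - a| := tri
    _ ≤ ε/2 + ∑ k ∈ Finset.range (n+1),
          (if n - k < N₁ then (n.choose k : ℝ) * α ^ k * β ^ (n-k) * M else 0) := step
    _ ≤ ε/2 + (N₁ : ℝ) * ((n:ℝ) ^ N₁ * α ^ (n - N₁) * M) := add_le_add le_rfl tail
    _ < ε := by linarith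

variable {K : Type*} [Group K]

def gT {ι : Type*} [Fintype ι] (M : Matrix ι ι (MonoidAlgebra ℚ K)) : ℚ := ∑ i, (M i i).coeff 1

def gA {ι : Type*} (M : Matrix ι ι (MonoidAlgebra ℚ K)) : Matrix ι ι (MonoidAlgebra ℚ K) :=
  fun i j => MonoidAlgebra.ofCoeff (Finsupp.mapDomain (fun g : K => g⁻¹) (M j i).coeff)

def gN {ι : Type*} [Fintype ι] (M : Matrix ι ι (MonoidAlgebra ℚ K)) : ℚ :=
  ∑ i, ∑ j, ∑ g ∈ (M i j).coeff.support, |(M i j).coeff g|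

lemma gT_smul {ι : Type*} [Fintype ι] (q : ℚ) (M : Matrix ι ι (MonoidAlgebra ℚ K)) :
    gT (q • M) = q * gT M := by
  unfold gT
  rw [Finset.mul_sum]
  exact Finset.sum_congr rfl fun i _ => rfl

lemma gT_sum {ι : Type*} [Fintype ι] {s : Finset ℕ} (f : ℕ → Matrix ι ι (MonoidAlgebra ℚ K)) :
    gT (∑ x ∈ s, f x) = ∑ x ∈ s, gT (f x) := by
  unfold gT
  rw [Finset.sum_comm]
  refine Finset.sum_congr rfl fun i _ => ?_
  rw [Matrix.sum_apply, MonoidAlgebra.coeff_sum, Finset.sum_apply']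

/-- changing the normalizing constant upwards does not change the limit -/
lemma changeC {ι : Type*} [Fintype ι] [DecidableEq ι]
    (A : Matrix ι ι (MonoidAlgebra ℚ K)) {c₁ c₂ : ℚ} (h1 : 0 < c₁) (h12 : c₁ ≤ c₂) {a : ℝ}
    (ht : Filter.Tendsto (fun n : ℕ => ((gT ((1 - c₁⁻¹ • A) ^ n) : ℚ) : ℝ))
      Filter.atTop (nhds a)) :
    Filter.Tendsto (fun n : ℕ => ((gT ((1 - c₂⁻¹ • A) ^ n) : ℚ) : ℝ))
      Filter.atTop (nhds a) := by
  have h2 : (0:ℚ) < c₂ := lt_of_lt_of_le h1 h12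
  set β : ℚ := c₁ / c₂ with hβdef
  set α : ℚ := 1 - β with hαdef
  have hβ0 : 0 < β := div_pos h1 h2
  have hβ1 : β ≤ 1 := (div_le_one h2).2 h12
  have hα0 : 0 ≤ α := by simp [hαdef]; linarith
  have hα1 : α < 1 := by simp [hαdef]; linarith
  set B : Matrix ι ι (MonoidAlgebra ℚ K) := 1 - c₁⁻¹ • A with hBdef
  have hid : (1 : Matrix ι ι (MonoidAlgebra ℚ K)) - c₂⁻¹ • A = α • 1 + β • B := by
    have hc : β * c₁⁻¹ = c₂⁻¹ := by
      field_simp [hβdef]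
      rw [hβdef, div_mul_cancel₀ _ h2.ne']
    have hαβ : α + β = 1 := by simp [hαdef]
    rw [hBdef, smul_sub, smul_smul, hc, ← add_sub_assoc, ← add_smul, hαβ, one_smul]
  have hexp : ∀ n : ℕ, gT ((1 - c₂⁻¹ • A) ^ n)
      = ∑ k ∈ Finset.range (n+1),
          (n.choose k : ℚ) * α ^ k * β ^ (n-k) * gT (B ^ (n-k)) := by
    intro n
    rw [hid]
    have hcomm : Commute (α • (1 : Matrix ι ι (MonoidAlgebra ℚ K))) (β • B) :=
      ((Commute.one_left (β • B)).smul_left α)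
    rw [hcomm.add_pow]
    rw [gT_sum]
    refine Finset.sum_congr rfl fun k _ => ?_
    rw [smul_pow, smul_pow, one_pow, smul_mul_smul_comm, one_mul]
    have : (α ^ k * β ^ (n-k)) • B ^ (n-k) * (n.choose k : Matrix ι ι (MonoidAlgebra ℚ K))
        = ((n.choose k : ℚ) * (α ^ k * β ^ (n-k))) • B ^ (n-k) := by
      rw [← (Nat.cast_commute (n.choose k) ((α ^ k * β ^ (n-k)) • B ^ (n-k))).eq,
        ← nsmul_eq_mul, ← Nat.cast_smul_eq_nsmul ℚ, smul_smul]
    rw [this, gT_smul]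
    ring
  have := euler_summation (α := (α : ℝ)) ht (by exact_mod_cast hα0) (by exact_mod_cast hα1)
  refine this.congr fun n => ?_
  rw [hexp n]
  push_cast
  refine Finset.sum_congr rfl fun k _ => ?_
  have : ((1:ℚ) - α : ℚ) = β := by simp [hαdef]
  rw [← this]
  push_cast
  ring

variable {k m : ℕ}

lemma gT_reindex (M : Matrix (Fin k ⊕ Fin m) (Fin k ⊕ Fin m) (MonoidAlgebra ℚ K)) :
    gT (Matrix.reindexAlgEquiv ℚ (MonoidAlgebra ℚ K) finSumFinEquiv M) = gT M := by
  unfold gT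
  simp only [Matrix.reindexAlgEquiv_apply, Matrix.reindex_apply, Matrix.submatrix_apply]
  exact Equiv.sum_comp (finSumFinEquiv.symm) (fun j => (M j j).coeff 1)

lemma gN_reindex (M : Matrix (Fin k ⊕ Fin m) (Fin k ⊕ Fin m) (MonoidAlgebra ℚ K)) :
    gN (Matrix.reindexAlgEquiv ℚ (MonoidAlgebra ℚ K) finSumFinEquiv M) = gN M := by
  unfold gN
  simp only [Matrix.reindexAlgEquiv_apply, Matrix.reindex_apply, Matrix.submatrix_apply]
  refine Fintype.sum_equiv finSumFinEquiv.symm _ _ fun i => ?_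
  exact Fintype.sum_equiv finSumFinEquiv.symm _ _ fun j => rfl

lemma gA_reindex (M : Matrix (Fin k ⊕ Fin m) (Fin k ⊕ Fin m) (MonoidAlgebra ℚ K)) :
    gA (Matrix.reindexAlgEquiv ℚ (MonoidAlgebra ℚ K) finSumFinEquiv M)
      = Matrix.reindexAlgEquiv ℚ (MonoidAlgebra ℚ K) finSumFinEquiv (gA M) := rfl

lemma gA_fromBlocks (A : Matrix (Fin k) (Fin k) (MonoidAlgebra ℚ K))
    (D : Matrix (Fin m) (Fin m) (MonoidAlgebra ℚ K)) :
    gA (Matrix.fromBlocks A 0 0 D) = Matrix.fromBlocks (gA A) 0 0 (gA D) := by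
  ext (i | i) (j | j)
  · rfl
  · show (Finsupp.mapDomain (fun g : K => g⁻¹) (0 : MonoidAlgebra ℚ K).coeff) _ = (0 : MonoidAlgebra ℚ K).coeff _
    rw [MonoidAlgebra.coeff_zero, Finsupp.mapDomain_zero]
  · show (Finsupp.mapDomain (fun g : K => g⁻¹) (0 : MonoidAlgebra ℚ K).coeff) _ = (0 : MonoidAlgebra ℚ K).coeff _
    rw [MonoidAlgebra.coeff_zero, Finsupp.mapDomain_zero]
  · rfl

lemma fromBlocks_sub' (A B : Matrix (Fin k) (Fin k) (MonoidAlgebra ℚ K))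
    (C D : Matrix (Fin m) (Fin m) (MonoidAlgebra ℚ K)) :
    Matrix.fromBlocks A 0 0 C - Matrix.fromBlocks B 0 0 D
      = Matrix.fromBlocks (A - B) 0 0 (C - D) := by
  ext (i | i) (j | j) <;> simp

lemma fromBlocks_pow (A : Matrix (Fin k) (Fin k) (MonoidAlgebra ℚ K))
    (D : Matrix (Fin m) (Fin m) (MonoidAlgebra ℚ K)) (n : ℕ) :
    (Matrix.fromBlocks A 0 0 D) ^ n = Matrix.fromBlocks (A ^ n) 0 0 (D ^ n) := by
  induction n with
  | zero => simp [Matrix.fromBlocks_one]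
  | succ n ih => rw [pow_succ, ih, Matrix.fromBlocks_multiply]; simp [pow_succ]

lemma gT_fromBlocks (A : Matrix (Fin k) (Fin k) (MonoidAlgebra ℚ K))
    (B : Matrix (Fin k) (Fin m) _) (C : Matrix (Fin m) (Fin k) _)
    (D : Matrix (Fin m) (Fin m) (MonoidAlgebra ℚ K)) :
    gT (Matrix.fromBlocks A B C D) = gT A + gT D := by
  unfold gT
  rw [Fintype.sum_sum_type]
  rfl

lemma gN_fromBlocks (A : Matrix (Fin k) (Fin k) (MonoidAlgebra ℚ K))
    (D : Matrix (Fin m) (Fin m) (MonoidAlgebra ℚ K)) :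
    gN (Matrix.fromBlocks A 0 0 D) = gN A + gN D := by
  unfold gN
  rw [Fintype.sum_sum_type]
  congr 1
  · refine Finset.sum_congr rfl fun i _ => ?_
    rw [Fintype.sum_sum_type]
    simp
  · refine Finset.sum_congr rfl fun i _ => ?_
    rw [Fintype.sum_sum_type]
    simp

lemma gN_nonneg {ι : Type*} [Fintype ι] (M : Matrix ι ι (MonoidAlgebra ℚ K)) : 0 ≤ gN M := by
  unfold gN
  exact Finset.sum_nonneg fun i _ => Finset.sum_nonneg fun j _ =>
    Finset.sum_nonneg fun g _ => abs_nonneg _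

open L2B

/-- main combination lemma: 𝒞(K) is closed under addition -/
lemma betti_add_in {a b : ℝ} (ha : a ∈ betti K) (hb : b ∈ betti K) : a + b ∈ betti K := by
  obtain ⟨k, T, hT⟩ := ha
  obtain ⟨m, S, hS⟩ := hb
  set E := Matrix.reindexAlgEquiv ℚ (MonoidAlgebra ℚ K) (finSumFinEquiv (m := k) (n := m))
    with hE
  set F : Matrix (Fin k ⊕ Fin m) (Fin k ⊕ Fin m) (MonoidAlgebra ℚ K) :=
    Matrix.fromBlocks T 0 0 S with hF
  set D : Matrix (Fin (k+m)) (Fin (k+m)) (MonoidAlgebra ℚ K) := E F with hD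
  refine ⟨k + m, D, ?_⟩
  -- ν and c of D
  have hnuD : mNu D = mNu T + mNu S := by
    show gN (E F) = mNu T + mNu S
    rw [hE, gN_reindex, hF, gN_fromBlocks]
    rfl
  have hcT : (0:ℚ) < mC T := by
    have := gN_nonneg (K := K) T
    show (0:ℚ) < mNu T ^ 2 + 1
    positivity
  have hcS : (0:ℚ) < mC S := by
    have := gN_nonneg (K := K) S
    show (0:ℚ) < mNu S ^ 2 + 1
    positivity
  have hnuT : (0:ℚ) ≤ mNu T := gN_nonneg T
  have hnuS : (0:ℚ) ≤ mNu S := gN_nonneg S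
  have hcTD : mC T ≤ mC D := by
    show mNu T ^ 2 + 1 ≤ mNu D ^ 2 + 1
    rw [hnuD]
    nlinarith
  have hcSD : mC S ≤ mC D := by
    show mNu S ^ 2 + 1 ≤ mNu D ^ 2 + 1
    rw [hnuD]
    nlinarith
  -- rewriting the trace sequence of D
  have hseq : ∀ n : ℕ, mTrace ((1 - (mC D)⁻¹ • (mAdj D * D)) ^ n)
      = gT ((1 - (mC D)⁻¹ • (gA T * T)) ^ n) + gT ((1 - (mC D)⁻¹ • (gA S * S)) ^ n) := by
    intro n
    have h1 : mAdj D * D = E (gA F * F) := by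
      show gA (E F) * E F = E (gA F * F)
      rw [hE, gA_reindex, ← _root_.map_mul]
    have h2 : (1 : Matrix (Fin (k+m)) (Fin (k+m)) (MonoidAlgebra ℚ K))
        - (mC D)⁻¹ • (mAdj D * D) = E (1 - (mC D)⁻¹ • (gA F * F)) := by
      rw [h1, _root_.map_sub, _root_.map_one, _root_.map_smul]
    have h3 : gA F * F = Matrix.fromBlocks (gA T * T) 0 0 (gA S * S) := by
      rw [hF, gA_fromBlocks, Matrix.fromBlocks_multiply]
      simp
    have h4 : (1 : Matrix (Fin k ⊕ Fin m) (Fin k ⊕ Fin m) (MonoidAlgebra ℚ K))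
        - (mC D)⁻¹ • (gA F * F)
        = Matrix.fromBlocks (1 - (mC D)⁻¹ • (gA T * T)) 0 0 (1 - (mC D)⁻¹ • (gA S * S)) := by
      rw [h3, Matrix.fromBlocks_smul]
      simp only [smul_zero]
      rw [← Matrix.fromBlocks_one, fromBlocks_sub']
    show gT _ = _
    rw [h2, ← _root_.map_pow, hE, gT_reindex, h4, fromBlocks_pow, gT_fromBlocks]
  -- limits
  have hT' : Filter.Tendsto
      (fun n : ℕ => ((gT ((1 - (mC D)⁻¹ • (gA T * T)) ^ n) : ℚ) : ℝ))
      Filter.atTop (nhds a) := changeC (gA T * T) hcT hcTD hT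
  have hS' : Filter.Tendsto
      (fun n : ℕ => ((gT ((1 - (mC D)⁻¹ • (gA S * S)) ^ n) : ℚ) : ℝ))
      Filter.atTop (nhds b) := changeC (gA S * S) hcS hcSD hS
  unfold HasDimKer
  refine (hT'.add hS').congr fun n => ?_
  rw [hseq n]
  push_cast
  ring

/-- monotonicity under injective group homomorphisms -/
lemma betti_le {L : Type*} [Group L] (f : K →* L) (hf : Function.Injective f) :
    betti K ⊆ betti L := by
  rintro r ⟨k, T, hT⟩
  classical
  set ψ : MonoidAlgebra ℚ K →+* MonoidAlgebra ℚ L := MonoidAlgebra.mapDomainRingHom ℚ f with hψ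
  set Ψ : Matrix (Fin k) (Fin k) (MonoidAlgebra ℚ K) →+*
      Matrix (Fin k) (Fin k) (MonoidAlgebra ℚ L) := ψ.mapMatrix with hΨ
  have happ : ∀ (M : Matrix (Fin k) (Fin k) (MonoidAlgebra ℚ K)) i j,
      (Ψ M i j).coeff = Finsupp.mapDomain f (M i j).coeff := fun M i j => rfl
  have hTr : ∀ M : Matrix (Fin k) (Fin k) (MonoidAlgebra ℚ K), mTrace (Ψ M) = mTrace M := by
    intro M
    refine Finset.sum_congr rfl fun i _ => ?_
    rw [happ]
    have h1 : (1 : L) = f 1 := (_root_.map_one f).symm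
    rw [h1, Finsupp.mapDomain_apply hf]
  have hAdj : ∀ M : Matrix (Fin k) (Fin k) (MonoidAlgebra ℚ K), mAdj (Ψ M) = Ψ (mAdj M) := by
    intro M
    refine Matrix.ext fun i j => ?_
    show MonoidAlgebra.ofCoeff (Finsupp.mapDomain (fun g : L => g⁻¹) (Ψ M j i).coeff) = MonoidAlgebra.mapDomain f (mAdj M i j)
    rw [happ]
    show MonoidAlgebra.ofCoeff (Finsupp.mapDomain _ (Finsupp.mapDomain _ _)) = MonoidAlgebra.ofCoeff (Finsupp.mapDomain _ (Finsupp.mapDomain _ _))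
    rw [← Finsupp.mapDomain_comp, ← Finsupp.mapDomain_comp]
    congr 2
    funext g
    exact (map_inv f g).symm
  have hNu : mNu (Ψ T) = mNu T := by
    refine Finset.sum_congr rfl fun i _ => Finset.sum_congr rfl fun j _ => ?_
    rw [happ, Finsupp.mapDomain_support_of_injective hf, Finset.sum_image
      (fun x _ y _ h => hf h)]
    refine Finset.sum_congr rfl fun g _ => ?_
    rw [Finsupp.mapDomain_apply hf]
  have hSmul : ∀ (q : ℚ) (M : Matrix (Fin k) (Fin k) (MonoidAlgebra ℚ K)),
      Ψ (q • M) = q • Ψ M := by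
    intro q M
    refine Matrix.ext fun i j => ?_
    rw [Matrix.smul_apply]
    show MonoidAlgebra.mapDomain f (q • M i j) = q • MonoidAlgebra.mapDomain f (M i j)
    exact MonoidAlgebra.mapDomain_smul f q (M i j)
  refine ⟨k, Ψ T, ?_⟩
  unfold HasDimKer
  have hc : mC (Ψ T) = mC T := by
    show mNu (Ψ T) ^ 2 + 1 = mNu T ^ 2 + 1
    rw [hNu]
  have hmain : ∀ n : ℕ, (1 - (mC (Ψ T))⁻¹ • (mAdj (Ψ T) * Ψ T)) ^ n
      = Ψ ((1 - (mC T)⁻¹ • (mAdj T * T)) ^ n) := by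
    intro n
    rw [_root_.map_pow]
    congr 1
    rw [_root_.map_sub, _root_.map_one, hSmul, _root_.map_mul, ← hAdj, hc]
  refine hT.congr fun n => ?_
  congr 1
  rw [hmain n, hTr]

end L2BAux

open L2B in
/-- (i) 𝒞(G) is closed under addition, and (ii) if a ∈ 𝒞(G), b ∈ 𝒞(H)
then a + b ∈ 𝒞(G × H). -/
theorem betti_add_closed (G : Type*) [Group G] [Countable G]
    (H : Type*) [Group H] [Countable H] :
    (∀ a b : ℝ, a ∈ betti G → b ∈ betti G → a + b ∈ betti G) ∧
      (∀ a b : ℝ, a ∈ betti G → b ∈ betti H → a + b ∈ betti (G × H)) := by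
  constructor
  · intro a b ha hb
    exact L2BAux.betti_add_in ha hb
  · intro a b ha hb
    have ha' : a ∈ betti (G × H) :=
      L2BAux.betti_le (MonoidHom.inl G H) (fun x y h => by simpa using congrArg Prod.fst h) ha
    have hb' : b ∈ betti (G × H) :=
      L2BAux.betti_le (MonoidHom.inr G H) (fun x y h => by simpa using congrArg Prod.snd h) hb
    exact L2BAux.betti_add_in ha' hb'

end
end
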